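/- Let μ ∈ ℝ, B > 0, s > 0, r ≥ 0, k ∈ ℝ, α : ℝ → ℝ, v : ℝ → ℝ and x₀ ∈ ℝ. Assume v admits a left derivative D⁻v(x₀) and a right derivative D⁺v(x₀) at x₀ with D⁺v(x₀) ≥ 1, and that v is a viscosity subsolution of min{−Lv, v'−1} = 0 at x₀: for every twice continuously differentiable φ : ℝ → ℝ such that x₀ is a local maximum of v − φ, one has min( −(μ·B − α((k−x₀)⁺))·φ'(x₀) − (s²/2)·φ''(x₀) + r·v(x₀), φ'(x₀) − 1 ) ≤ 0. Then D⁻v(x₀) ≤ D⁺v(x₀). -/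

import Mathlib

/-- Subsolution step in the C¹ regularity proof: if `v` has one-sided
derivatives at `x₀` with `D⁺v(x₀) ≥ 1` and is a viscosity subsolution of
`min(-Lv, v' - 1) = 0` at `x₀`, then `D⁻v(x₀) ≤ D⁺v(x₀)`. -/
theorem subsolution_one_sided_derivatives
    (μ B s r k : ℝ) (hB : 0 < B) (hs : 0 < s) (hr : 0 ≤ r)
    (α : ℝ → ℝ) (v : ℝ → ℝ) (x₀ : ℝ) (Dm Dp : ℝ)
    (hDm : Filter.Tendsto (fun x => (v x - v x₀) / (x - x₀))
      (nhdsWithin x₀ (Set.Iio x₀)) (nhds Dm))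
    (hDp : Filter.Tendsto (fun x => (v x - v x₀) / (x - x₀))
      (nhdsWithin x₀ (Set.Ioi x₀)) (nhds Dp))
    (hDp1 : 1 ≤ Dp)
    (hsub : ∀ φ : ℝ → ℝ, ContDiff ℝ 2 φ →
      IsLocalMax (fun x => v x - φ x) x₀ →
      min (-(μ * B - α (max (k - x₀) 0)) * deriv φ x₀
            - s ^ 2 / 2 * deriv (deriv φ) x₀ + r * v x₀)
          (deriv φ x₀ - 1) ≤ 0) :
    Dm ≤ Dp := by
  by_contra hlt
  push_neg at hlt
  set A : ℝ := μ * B - α (max (k - x₀) 0) with hA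
  set p : ℝ := (Dp + Dm) / 2 with hp
  have hs2 : (0:ℝ) < s ^ 2 := by positivity
  set n : ℝ := (|A * p - r * v x₀| + 1) / s ^ 2 with hn
  have hn0 : 0 < n := by positivity
  have hp1 : 1 < p := by simp only [hp]; linarith
  set p₁ : ℝ := (Dp + p) / 2 with hp₁
  set p₂ : ℝ := (p + Dm) / 2 with hp₂
  have h1 : Dp < p₁ := by simp only [hp₁, hp]; linarith
  have h2 : p₁ < p := by simp only [hp₁, hp]; linarith
  have h3 : p < p₂ := by simp only [hp₂, hp]; linarith
  have h4 : p₂ < Dm := by simp only [hp₂, hp]; linarith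
  -- right side eventual bound
  have hR : ∀ᶠ x in nhdsWithin x₀ (Set.Ioi x₀), (v x - v x₀) / (x - x₀) < p₁ :=
    hDp.eventually_lt_const h1
  have hL : ∀ᶠ x in nhdsWithin x₀ (Set.Iio x₀), p₂ < (v x - v x₀) / (x - x₀) :=
    hDm.eventually_const_lt h4
  obtain ⟨u, hu, hu'⟩ := mem_nhdsGT_iff_exists_Ioo_subset.mp hR
  obtain ⟨l, hl, hl'⟩ := mem_nhdsLT_iff_exists_Ioo_subset.mp hL
  set δ : ℝ := min (min (u - x₀) (x₀ - l)) (min ((p - p₁) / n) ((p₂ - p) / n)) with hδ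
  have hδ0 : 0 < δ := by
    apply lt_min (lt_min (by simpa using hu) (by simpa using hl))
    exact lt_min (div_pos (by linarith) hn0) (div_pos (by linarith) hn0)
  set φ : ℝ → ℝ := fun x => v x₀ + p * (x - x₀) - n * (x - x₀) ^ 2 with hφ
  have hC2 : ContDiff ℝ 2 φ := by
    apply ContDiff.sub
    · exact contDiff_const.add (contDiff_const.mul (contDiff_id.sub contDiff_const))
    · exact contDiff_const.mul ((contDiff_id.sub contDiff_const).pow 2)
  have hder : ∀ x : ℝ, HasDerivAt φ (p - n * (2 * (x - x₀))) x := by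
    intro x
    have h1 : HasDerivAt (fun x : ℝ => x - x₀) 1 x := (hasDerivAt_id x).sub_const x₀
    have h2 : HasDerivAt (fun x : ℝ => p * (x - x₀)) p x := by
      simpa using h1.const_mul p
    have h3 : HasDerivAt (fun x : ℝ => (x - x₀) ^ 2) (2 * (x - x₀)) x := by
      have := h1.pow 2; simp at this; exact this
    have h4 : HasDerivAt (fun x : ℝ => n * (x - x₀) ^ 2) (n * (2 * (x - x₀))) x :=
      h3.const_mul n
    exact ((h2.const_add (v x₀)).sub h4)
  have hderiv1 : deriv φ = fun x => p - n * (2 * (x - x₀)) := by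
    funext x; exact (hder x).deriv
  have hderiv2 : deriv (deriv φ) x₀ = -(2 * n) := by
    rw [hderiv1]
    have h1 : HasDerivAt (fun x : ℝ => p - n * (2 * (x - x₀))) (-(2 * n)) x₀ := by
      have h2 : HasDerivAt (fun x : ℝ => n * (2 * (x - x₀))) (2 * n) x₀ := by
        simpa [mul_comm] using (((hasDerivAt_id x₀).sub_const x₀).const_mul 2).const_mul n
      simpa using h2.const_sub p
    exact h1.deriv
  have hderiv0 : deriv φ x₀ = p := by rw [hderiv1]; simp
  have hmax : IsLocalMax (fun x => v x - φ x) x₀ := by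
    have hmem : Set.Ioo (x₀ - δ) (x₀ + δ) ∈ nhds x₀ :=
      Ioo_mem_nhds (by linarith) (by linarith)
    refine Filter.eventually_of_mem hmem ?_
    intro x hx
    have hφx₀ : φ x₀ = v x₀ := by simp [hφ]
    simp only [hφx₀]
    rcases lt_trichotomy x x₀ with hc | hc | hc
    · -- left side
      have hx1 : x ∈ Set.Ioo l x₀ := by
        refine ⟨?_, hc⟩
        have hδl : δ ≤ x₀ - l := le_trans (min_le_left _ _) (min_le_right _ _)
        have := hx.1; linarith
      have hq : p₂ < (v x - v x₀) / (x - x₀) := hl' hx1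
      have hxneg : x - x₀ < 0 := by linarith
      have hvb : v x - v x₀ < p₂ * (x - x₀) := (lt_div_iff_of_neg hxneg).mp hq
      have hδb : δ ≤ (p₂ - p) / n := le_trans (min_le_right _ _) (min_le_right _ _)
      have ht : x₀ - x < (p₂ - p) / n := by
        have := hx.1; linarith [lt_of_lt_of_le (show x₀ - x < δ by linarith) hδb]
      have hnt : n * (x₀ - x) < p₂ - p := by
        have := (lt_div_iff₀' hn0).mp ht; linarith [this]
      simp only [hφ]
      nlinarith [sq_nonneg (x - x₀)]
    · subst hc; simp [hφ]
    · -- right side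
      have hx1 : x ∈ Set.Ioo x₀ u := by
        constructor
        · exact hc
        · have : δ ≤ u - x₀ := le_trans (min_le_left _ _) (min_le_left _ _)
          have := hx.2; linarith
      have hq : (v x - v x₀) / (x - x₀) < p₁ := hu' hx1
      have hxpos : 0 < x - x₀ := by linarith
      have hvb : v x - v x₀ < p₁ * (x - x₀) := (div_lt_iff₀ hxpos).mp hq
      have hδb : δ ≤ (p - p₁) / n := le_trans (min_le_right _ _) (min_le_left _ _)
      have ht : x - x₀ < (p - p₁) / n := by
        have := hx.2; linarith [lt_of_lt_of_le (show x - x₀ < δ by linarith) hδb]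
      have hnt : n * (x - x₀) < p - p₁ := by
        have := (lt_div_iff₀' hn0).mp ht; linarith [this]
      simp only [hφ]
      nlinarith [sq_nonneg (x - x₀)]
  have hmin := hsub φ hC2 hmax
  rw [hderiv0, hderiv2] at hmin
  have hns2 : n * s ^ 2 = |A * p - r * v x₀| + 1 := by
    rw [hn]; field_simp
  have habs : A * p - r * v x₀ ≤ |A * p - r * v x₀| := le_abs_self _
  have hfirst : 0 < -A * p - s ^ 2 / 2 * -(2 * n) + r * v x₀ := by
    have : -A * p - s ^ 2 / 2 * -(2 * n) + r * v x₀ = n * s ^ 2 - (A * p - r * v x₀) := by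
      ring
    rw [this, hns2]; linarith
  have hsecond : 0 < p - 1 := by linarith
  have : 0 < min (-A * p - s ^ 2 / 2 * -(2 * n) + r * v x₀) (p - 1) :=
    lt_min hfirst hsecond
  linarith
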